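/- Let G be the presented group with two generators a, b and relators [a, [a, b]]·[b⁻¹, [a, b]]⁻¹, [[a, [a, b]], a], and [[a, [a, b]], b] (i.e., G = ⟨a, b | [a,[a,b]] = [b⁻¹,[a,b]] is central⟩). Then the group homomorphism G → Ē determined by a ↦ ((1, 1), 0, 0) and b ↦ ((1, −1), 0, 0) is injective; hence G is isomorphic to the subgroup 𝓔 of Ē generated by ((1,1),0,0) and ((1,−1),0,0). -/

import Mathlib

noncomputable section

/-- The Engel Lie group `Ē`: underlying set `ℝ² × ℝ × ℝ`, with coordinates
`(x, y)` (endpoint), `A` (signed area) and `B` (the `y`-moment). -/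
@[ext]
structure Engel where
  x : ℝ
  y : ℝ
  A : ℝ
  B : ℝ

namespace Engel

instance : Mul Engel :=
  ⟨fun g h =>
    ⟨g.x + h.x, g.y + h.y,
     g.A + h.A + (g.x * h.y - g.y * h.x) / 2,
     g.B + h.B + g.y * h.A + (2 * g.y + h.y) * (g.x * h.y - g.y * h.x) / 6⟩⟩

instance : One Engel := ⟨⟨0, 0, 0, 0⟩⟩

instance : Inv Engel := ⟨fun g => ⟨-g.x, -g.y, -g.A, -g.B + g.y * g.A⟩⟩

@[simp] lemma mul_x (g h : Engel) : (g * h).x = g.x + h.x := rfl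
@[simp] lemma mul_y (g h : Engel) : (g * h).y = g.y + h.y := rfl
@[simp] lemma mul_A (g h : Engel) :
    (g * h).A = g.A + h.A + (g.x * h.y - g.y * h.x) / 2 := rfl
@[simp] lemma mul_B (g h : Engel) :
    (g * h).B = g.B + h.B + g.y * h.A
      + (2 * g.y + h.y) * (g.x * h.y - g.y * h.x) / 6 := rfl
@[simp] lemma one_x : (1 : Engel).x = 0 := rfl
@[simp] lemma one_y : (1 : Engel).y = 0 := rfl
@[simp] lemma one_A : (1 : Engel).A = 0 := rfl
@[simp] lemma one_B : (1 : Engel).B = 0 := rfl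
@[simp] lemma inv_x (g : Engel) : g⁻¹.x = -g.x := rfl
@[simp] lemma inv_y (g : Engel) : g⁻¹.y = -g.y := rfl
@[simp] lemma inv_A (g : Engel) : g⁻¹.A = -g.A := rfl
@[simp] lemma inv_B (g : Engel) : g⁻¹.B = -g.B + g.y * g.A := rfl

instance : Group Engel where
  mul_assoc a b c := by ext <;> simp <;> ring
  one_mul a := by ext <;> simp
  mul_one a := by ext <;> simp
  inv_mul_cancel a := by
    ext <;>
      simp only [mul_x, mul_y, mul_A, mul_B, inv_x, inv_y, inv_A, inv_B,
        one_x, one_y, one_A, one_B] <;> ring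

/-- `a^t`: the straight segment from `(0,0)` to `(t,t)`. -/
def aPow (t : ℝ) : Engel := ⟨t, t, 0, 0⟩

/-- `b^t`: the straight segment from `(0,0)` to `(t,-t)`. -/
def bPow (t : ℝ) : Engel := ⟨t, -t, 0, 0⟩

end Engel

namespace Engel

/-- The generator `a` of the free group on `{a, b}` (encoded as `Bool`). -/
def ga : FreeGroup Bool := FreeGroup.of true

/-- The generator `b` of the free group on `{a, b}` (encoded as `Bool`). -/
def gb : FreeGroup Bool := FreeGroup.of false

open scoped commutatorElement

/-- The relators of `G = ⟨a, b | [a,[a,b]] = [b⁻¹,[a,b]] is central⟩`: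
`[a, [a, b]]·[b⁻¹, [a, b]]⁻¹`, `[[a, [a, b]], a]` and `[[a, [a, b]], b]`. -/
def engelRels : Set (FreeGroup Bool) :=
  {⁅ga, ⁅ga, gb⁆⁆ * ⁅gb⁻¹, ⁅ga, gb⁆⁆⁻¹, ⁅⁅ga, ⁅ga, gb⁆⁆, ga⁆, ⁅⁅ga, ⁅ga, gb⁆⁆, gb⁆}


/-! ### Generators and basic relations in the presented group -/

/-- The image of `a` in the presented group. -/
def aa : PresentedGroup engelRels := PresentedGroup.of true

/-- The image of `b` in the presented group. -/
def bb : PresentedGroup engelRels := PresentedGroup.of false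

/-- The commutator `c = [a,b]` in the presented group. -/
def cc : PresentedGroup engelRels := ⁅aa, bb⁆

/-- The commutator `d = [a,[a,b]]` in the presented group. -/
def dd : PresentedGroup engelRels := ⁅aa, cc⁆

lemma mk_rel {r : FreeGroup Bool} (h : r ∈ engelRels) :
    PresentedGroup.mk engelRels r = 1 :=
  (QuotientGroup.eq_one_iff r).mpr (Subgroup.subset_normalClosure h)

lemma mk_ga : PresentedGroup.mk engelRels ga = aa := rfl

lemma mk_gb : PresentedGroup.mk engelRels gb = bb := rfl

lemma rel1 : dd = ⁅bb⁻¹, cc⁆ := by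
  have h := mk_rel (show ⁅ga, ⁅ga, gb⁆⁆ * ⁅gb⁻¹, ⁅ga, gb⁆⁆⁻¹ ∈ engelRels from
    Set.mem_insert _ _)
  simp only [map_mul, map_inv, map_commutatorElement, mk_ga, mk_gb] at h
  rw [mul_inv_eq_one] at h
  exact h

lemma rel2 : dd * aa = aa * dd := by
  have h := mk_rel (show ⁅⁅ga, ⁅ga, gb⁆⁆, ga⁆ ∈ engelRels from
    Set.mem_insert_of_mem _ (Set.mem_insert _ _))
  simp only [map_mul, map_inv, map_commutatorElement, mk_ga, mk_gb] at h
  exact commutatorElement_eq_one_iff_mul_comm.mp h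

lemma rel3 : dd * bb = bb * dd := by
  have h := mk_rel (show ⁅⁅ga, ⁅ga, gb⁆⁆, gb⁆ ∈ engelRels from
    Set.mem_insert_of_mem _ (Set.mem_insert_of_mem _ rfl))
  simp only [map_mul, map_inv, map_commutatorElement, mk_ga, mk_gb] at h
  exact commutatorElement_eq_one_iff_mul_comm.mp h

lemma dd_comm (g : PresentedGroup engelRels) : Commute dd g := by
  have hg : g ∈ Subgroup.centralizer {dd} := by
    refine PresentedGroup.generated_by engelRels (Subgroup.centralizer {dd}) ?_ g
    intro j
    cases j with
    | false => exact Subgroup.mem_centralizer_singleton_iff.mpr rel3.symm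
    | true => exact Subgroup.mem_centralizer_singleton_iff.mpr rel2.symm
  exact (Subgroup.mem_centralizer_singleton_iff.mp hg).symm

lemma hd1 (e : ℤ) (g : PresentedGroup engelRels) : dd ^ e * g = g * dd ^ e :=
  ((dd_comm g).zpow_left e).eq

/-! ### Single-step conjugation facts -/

lemma b1 : aa * cc * aa⁻¹ = dd ^ (1 : ℤ) * cc := by
  rw [zpow_one]
  simp only [dd, commutatorElement_def]
  group

lemma b2' : aa⁻¹ * cc * aa⁻¹⁻¹ = dd ^ (-1 : ℤ) * cc := by
  rw [inv_inv, zpow_neg_one]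
  have h2 : aa * cc = dd * (cc * aa) := by
    simp only [dd, commutatorElement_def]; group
  have h3 : aa * dd⁻¹ = dd⁻¹ * aa := ((dd_comm aa).inv_left.eq).symm
  calc aa⁻¹ * cc * aa = aa⁻¹ * (dd⁻¹ * (aa * cc)) := by rw [h2]; group
    _ = aa⁻¹ * ((dd⁻¹ * aa) * cc) := by group
    _ = aa⁻¹ * ((aa * dd⁻¹) * cc) := by rw [h3]
    _ = dd⁻¹ * cc := by group

lemma b3' : bb⁻¹ * cc * bb⁻¹⁻¹ = dd ^ (1 : ℤ) * cc := by
  rw [inv_inv, zpow_one, rel1, commutatorElement_def]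
  group

lemma b4 : bb * cc * bb⁻¹ = dd ^ (-1 : ℤ) * cc := by
  rw [zpow_neg_one]
  have h2 : bb⁻¹ * cc = dd * (cc * bb⁻¹) := by
    rw [rel1, commutatorElement_def]; group
  have h3 : dd⁻¹ * bb⁻¹ = bb⁻¹ * dd⁻¹ := ((dd_comm bb).inv_left.inv_right).eq
  calc bb * cc * bb⁻¹ = bb * (dd⁻¹ * (bb⁻¹ * cc)) := by rw [h2]; group
    _ = bb * ((dd⁻¹ * bb⁻¹) * cc) := by group
    _ = bb * ((bb⁻¹ * dd⁻¹) * cc) := by rw [h3]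
    _ = dd⁻¹ * cc := by group

/-! ### Conjugation of powers of `c` -/

lemma conj_zpow_cc {x : PresentedGroup engelRels} {s : ℤ}
    (h : x * cc * x⁻¹ = dd ^ s * cc) (t : ℤ) :
    x * cc ^ t * x⁻¹ = dd ^ (s * t) * cc ^ t := by
  have hc : Commute (dd ^ s) cc := (dd_comm cc).zpow_left s
  calc x * cc ^ t * x⁻¹ = (x * cc * x⁻¹) ^ t := by rw [conj_zpow]
    _ = (dd ^ s) ^ t * cc ^ t := by rw [h, hc.mul_zpow]
    _ = dd ^ (s * t) * cc ^ t := by rw [← zpow_mul]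

lemma czA (t : ℤ) : aa * cc ^ t * aa⁻¹ = dd ^ t * cc ^ t := by
  have h := conj_zpow_cc b1 t; rwa [one_mul] at h

lemma czA' (t : ℤ) : aa⁻¹ * cc ^ t * aa = dd ^ (-t) * cc ^ t := by
  have h := conj_zpow_cc b2' t; rwa [inv_inv, neg_one_mul] at h

lemma czB' (t : ℤ) : bb⁻¹ * cc ^ t * bb = dd ^ t * cc ^ t := by
  have h := conj_zpow_cc b3' t; rwa [inv_inv, one_mul] at h

lemma czB (t : ℤ) : bb * cc ^ t * bb⁻¹ = dd ^ (-t) * cc ^ t := by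
  have h := conj_zpow_cc b4 t; rwa [neg_one_mul] at h

/-! ### Moving powers of `c` past the generators -/

lemma mvA0 (t : ℤ) : cc ^ t * aa = aa * (cc ^ t * dd ^ (-t)) := by
  calc cc ^ t * aa = aa * (aa⁻¹ * cc ^ t * aa) := by group
    _ = aa * (dd ^ (-t) * cc ^ t) := by rw [czA']
    _ = aa * (cc ^ t * dd ^ (-t)) := by rw [hd1]

lemma mvAinv0 (t : ℤ) : cc ^ t * aa⁻¹ = aa⁻¹ * (cc ^ t * dd ^ t) := by
  calc cc ^ t * aa⁻¹ = aa⁻¹ * (aa * cc ^ t * aa⁻¹) := by group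
    _ = aa⁻¹ * (dd ^ t * cc ^ t) := by rw [czA]
    _ = aa⁻¹ * (cc ^ t * dd ^ t) := by rw [hd1]

lemma mvB0 (t : ℤ) : cc ^ t * bb = bb * (cc ^ t * dd ^ t) := by
  calc cc ^ t * bb = bb * (bb⁻¹ * cc ^ t * bb) := by group
    _ = bb * (dd ^ t * cc ^ t) := by rw [czB']
    _ = bb * (cc ^ t * dd ^ t) := by rw [hd1]

lemma mvBinv0 (t : ℤ) : cc ^ t * bb⁻¹ = bb⁻¹ * (cc ^ t * dd ^ (-t)) := by
  calc cc ^ t * bb⁻¹ = bb⁻¹ * (bb * cc ^ t * bb⁻¹) := by group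
    _ = bb⁻¹ * (dd ^ (-t) * cc ^ t) := by rw [czB]
    _ = bb⁻¹ * (cc ^ t * dd ^ (-t)) := by rw [hd1]

lemma mvBinv0' (t : ℤ) : bb⁻¹ * cc ^ t = cc ^ t * (bb⁻¹ * dd ^ t) := by
  calc bb⁻¹ * cc ^ t = (bb⁻¹ * cc ^ t * bb) * bb⁻¹ := by group
    _ = (dd ^ t * cc ^ t) * bb⁻¹ := by rw [czB']
    _ = (cc ^ t * dd ^ t) * bb⁻¹ := by rw [hd1]
    _ = cc ^ t * (dd ^ t * bb⁻¹) := by group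
    _ = cc ^ t * (bb⁻¹ * dd ^ t) := by rw [hd1]

/-! ### Moving powers of `c` past powers of `b` -/

lemma L_cB (t j : ℤ) : ∃ e : ℤ, cc ^ t * bb ^ j = bb ^ j * (cc ^ t * dd ^ e) := by
  induction j using Int.induction_on with
  | zero => exact ⟨0, by simp⟩
  | succ n ih =>
    obtain ⟨e, ih⟩ := ih
    refine ⟨e + t, ?_⟩
    calc cc ^ t * bb ^ ((n : ℤ) + 1)
        = (cc ^ t * bb ^ (n : ℤ)) * bb := by rw [zpow_add_one]; group
      _ = (bb ^ (n : ℤ) * (cc ^ t * dd ^ e)) * bb := by rw [ih]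
      _ = bb ^ (n : ℤ) * (cc ^ t * (dd ^ e * bb)) := by group
      _ = bb ^ (n : ℤ) * (cc ^ t * (bb * dd ^ e)) := by rw [hd1 e bb]
      _ = bb ^ (n : ℤ) * ((cc ^ t * bb) * dd ^ e) := by group
      _ = bb ^ (n : ℤ) * ((bb * (cc ^ t * dd ^ t)) * dd ^ e) := by rw [mvB0]
      _ = bb ^ ((n : ℤ) + 1) * (cc ^ t * dd ^ (e + t)) := by group
  | pred n ih =>
    obtain ⟨e, ih⟩ := ih
    refine ⟨e - t, ?_⟩
    calc cc ^ t * bb ^ (-(n : ℤ) - 1)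
        = (cc ^ t * bb ^ (-(n : ℤ))) * bb⁻¹ := by rw [zpow_sub_one]; group
      _ = (bb ^ (-(n : ℤ)) * (cc ^ t * dd ^ e)) * bb⁻¹ := by rw [ih]
      _ = bb ^ (-(n : ℤ)) * (cc ^ t * (dd ^ e * bb⁻¹)) := by group
      _ = bb ^ (-(n : ℤ)) * (cc ^ t * (bb⁻¹ * dd ^ e)) := by rw [hd1 e bb⁻¹]
      _ = bb ^ (-(n : ℤ)) * ((cc ^ t * bb⁻¹) * dd ^ e) := by group
      _ = bb ^ (-(n : ℤ)) * ((bb⁻¹ * (cc ^ t * dd ^ (-t))) * dd ^ e) := by rw [mvBinv0]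
      _ = bb ^ (-(n : ℤ) - 1) * (cc ^ t * dd ^ (e - t)) := by group

/-! ### Moving `b` (and `b⁻¹`) past powers of `a` -/

lemma s_ba : bb * aa = cc ^ (-1 : ℤ) * (aa * bb) := by
  rw [zpow_neg_one]
  simp only [cc, commutatorElement_def]
  group

lemma s_bainv : bb * aa⁻¹ = aa⁻¹ * (cc * bb) := by
  simp only [cc, commutatorElement_def]
  group

lemma s_b'a : bb⁻¹ * aa = cc * (aa * (bb⁻¹ * dd)) := by
  have h : bb⁻¹ * cc * bb = dd * cc := by
    have := b3'; rwa [inv_inv, zpow_one] at this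
  have h1 : dd * cc = cc * dd := (dd_comm cc).eq
  have h2 : dd * aa = aa * dd := rel2
  have h3 : dd * bb⁻¹ = bb⁻¹ * dd := (dd_comm bb⁻¹).eq
  calc bb⁻¹ * aa = (bb⁻¹ * cc * bb) * (aa * bb⁻¹) := by
        simp only [cc, commutatorElement_def]; group
    _ = (dd * cc) * (aa * bb⁻¹) := by rw [h]
    _ = (cc * dd) * (aa * bb⁻¹) := by rw [h1]
    _ = cc * ((dd * aa) * bb⁻¹) := by group
    _ = cc * ((aa * dd) * bb⁻¹) := by rw [h2]
    _ = cc * (aa * (dd * bb⁻¹)) := by group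
    _ = cc * (aa * (bb⁻¹ * dd)) := by rw [h3]

lemma s_b'ainv2 : bb⁻¹ * aa⁻¹ = aa⁻¹ * (cc ^ (-1 : ℤ) * (bb⁻¹ * dd ^ (-1 : ℤ))) := by
  have h0 : bb⁻¹ * aa⁻¹ = aa⁻¹ * (bb⁻¹ * cc ^ (-1 : ℤ)) := by
    rw [zpow_neg_one]
    simp only [cc, commutatorElement_def]
    group
  rw [h0, mvBinv0' (-1 : ℤ)]

lemma L_bA (i : ℤ) : ∃ k e : ℤ, bb * aa ^ i = aa ^ i * (cc ^ k * (bb * dd ^ e)) := by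
  induction i using Int.induction_on with
  | zero => exact ⟨0, 0, by simp⟩
  | succ n ih =>
    obtain ⟨k, e, ih⟩ := ih
    refine ⟨k - 1, e - (k - 1), ?_⟩
    calc bb * aa ^ ((n : ℤ) + 1)
        = (bb * aa ^ (n : ℤ)) * aa := by rw [zpow_add_one]; group
      _ = (aa ^ (n : ℤ) * (cc ^ k * (bb * dd ^ e))) * aa := by rw [ih]
      _ = aa ^ (n : ℤ) * (cc ^ k * (bb * (dd ^ e * aa))) := by group
      _ = aa ^ (n : ℤ) * (cc ^ k * (bb * (aa * dd ^ e))) := by rw [hd1 e aa]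
      _ = aa ^ (n : ℤ) * (cc ^ k * ((bb * aa) * dd ^ e)) := by group
      _ = aa ^ (n : ℤ) * (cc ^ k * ((cc ^ (-1 : ℤ) * (aa * bb)) * dd ^ e)) := by rw [s_ba]
      _ = aa ^ (n : ℤ) * ((cc ^ (k - 1) * aa) * (bb * dd ^ e)) := by group
      _ = aa ^ (n : ℤ) * ((aa * (cc ^ (k - 1) * dd ^ (-(k - 1)))) * (bb * dd ^ e)) := by
          rw [mvA0]
      _ = aa ^ ((n : ℤ) + 1) * (cc ^ (k - 1) * ((dd ^ (-(k - 1)) * bb) * dd ^ e)) := by group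
      _ = aa ^ ((n : ℤ) + 1) * (cc ^ (k - 1) * ((bb * dd ^ (-(k - 1))) * dd ^ e)) := by
          rw [hd1 (-(k - 1)) bb]
      _ = aa ^ ((n : ℤ) + 1) * (cc ^ (k - 1) * (bb * dd ^ (e - (k - 1)))) := by group
  | pred n ih =>
    obtain ⟨k, e, ih⟩ := ih
    refine ⟨k + 1, e + k, ?_⟩
    calc bb * aa ^ (-(n : ℤ) - 1)
        = (bb * aa ^ (-(n : ℤ))) * aa⁻¹ := by rw [zpow_sub_one]; group
      _ = (aa ^ (-(n : ℤ)) * (cc ^ k * (bb * dd ^ e))) * aa⁻¹ := by rw [ih]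
      _ = aa ^ (-(n : ℤ)) * (cc ^ k * (bb * (dd ^ e * aa⁻¹))) := by group
      _ = aa ^ (-(n : ℤ)) * (cc ^ k * (bb * (aa⁻¹ * dd ^ e))) := by rw [hd1 e aa⁻¹]
      _ = aa ^ (-(n : ℤ)) * (cc ^ k * ((bb * aa⁻¹) * dd ^ e)) := by group
      _ = aa ^ (-(n : ℤ)) * (cc ^ k * ((aa⁻¹ * (cc * bb)) * dd ^ e)) := by rw [s_bainv]
      _ = aa ^ (-(n : ℤ)) * ((cc ^ k * aa⁻¹) * (cc * (bb * dd ^ e))) := by group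
      _ = aa ^ (-(n : ℤ)) * ((aa⁻¹ * (cc ^ k * dd ^ k)) * (cc * (bb * dd ^ e))) := by
          rw [mvAinv0]
      _ = aa ^ (-(n : ℤ) - 1) * (cc ^ k * ((dd ^ k * cc) * (bb * dd ^ e))) := by group
      _ = aa ^ (-(n : ℤ) - 1) * (cc ^ k * ((cc * dd ^ k) * (bb * dd ^ e))) := by
          rw [hd1 k cc]
      _ = aa ^ (-(n : ℤ) - 1) * (cc ^ (k + 1) * ((dd ^ k * bb) * dd ^ e)) := by group
      _ = aa ^ (-(n : ℤ) - 1) * (cc ^ (k + 1) * ((bb * dd ^ k) * dd ^ e)) := by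
          rw [hd1 k bb]
      _ = aa ^ (-(n : ℤ) - 1) * (cc ^ (k + 1) * (bb * dd ^ (e + k))) := by group

lemma L_binvA (i : ℤ) : ∃ k e : ℤ, bb⁻¹ * aa ^ i = aa ^ i * (cc ^ k * (bb⁻¹ * dd ^ e)) := by
  induction i using Int.induction_on with
  | zero => exact ⟨0, 0, by simp⟩
  | succ n ih =>
    obtain ⟨k, e, ih⟩ := ih
    refine ⟨k + 1, e - k, ?_⟩
    calc bb⁻¹ * aa ^ ((n : ℤ) + 1)
        = (bb⁻¹ * aa ^ (n : ℤ)) * aa := by rw [zpow_add_one]; group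
      _ = (aa ^ (n : ℤ) * (cc ^ k * (bb⁻¹ * dd ^ e))) * aa := by rw [ih]
      _ = aa ^ (n : ℤ) * (cc ^ k * (bb⁻¹ * (dd ^ e * aa))) := by group
      _ = aa ^ (n : ℤ) * (cc ^ k * (bb⁻¹ * (aa * dd ^ e))) := by rw [hd1 e aa]
      _ = aa ^ (n : ℤ) * (cc ^ k * ((bb⁻¹ * aa) * dd ^ e)) := by group
      _ = aa ^ (n : ℤ) * (cc ^ k * ((cc * (aa * (bb⁻¹ * dd))) * dd ^ e)) := by rw [s_b'a]
      _ = aa ^ (n : ℤ) * ((cc ^ (k + 1) * aa) * (bb⁻¹ * (dd * dd ^ e))) := by group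
      _ = aa ^ (n : ℤ) * ((aa * (cc ^ (k + 1) * dd ^ (-(k + 1)))) * (bb⁻¹ * (dd * dd ^ e))) := by
          rw [mvA0]
      _ = aa ^ ((n : ℤ) + 1) * (cc ^ (k + 1) * ((dd ^ (-(k + 1)) * bb⁻¹) * (dd * dd ^ e))) := by
          group
      _ = aa ^ ((n : ℤ) + 1) * (cc ^ (k + 1) * ((bb⁻¹ * dd ^ (-(k + 1))) * (dd * dd ^ e))) := by
          rw [hd1 (-(k + 1)) bb⁻¹]
      _ = aa ^ ((n : ℤ) + 1) * (cc ^ (k + 1) * (bb⁻¹ * dd ^ (e - k))) := by group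
  | pred n ih =>
    obtain ⟨k, e, ih⟩ := ih
    refine ⟨k - 1, e + k - 1, ?_⟩
    calc bb⁻¹ * aa ^ (-(n : ℤ) - 1)
        = (bb⁻¹ * aa ^ (-(n : ℤ))) * aa⁻¹ := by rw [zpow_sub_one]; group
      _ = (aa ^ (-(n : ℤ)) * (cc ^ k * (bb⁻¹ * dd ^ e))) * aa⁻¹ := by rw [ih]
      _ = aa ^ (-(n : ℤ)) * (cc ^ k * (bb⁻¹ * (dd ^ e * aa⁻¹))) := by group
      _ = aa ^ (-(n : ℤ)) * (cc ^ k * (bb⁻¹ * (aa⁻¹ * dd ^ e))) := by rw [hd1 e aa⁻¹]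
      _ = aa ^ (-(n : ℤ)) * (cc ^ k * ((bb⁻¹ * aa⁻¹) * dd ^ e)) := by group
      _ = aa ^ (-(n : ℤ)) * (cc ^ k *
            ((aa⁻¹ * (cc ^ (-1 : ℤ) * (bb⁻¹ * dd ^ (-1 : ℤ)))) * dd ^ e)) := by rw [s_b'ainv2]
      _ = aa ^ (-(n : ℤ)) * ((cc ^ k * aa⁻¹) *
            (cc ^ (-1 : ℤ) * (bb⁻¹ * (dd ^ (-1 : ℤ) * dd ^ e)))) := by group
      _ = aa ^ (-(n : ℤ)) * ((aa⁻¹ * (cc ^ k * dd ^ k)) *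
            (cc ^ (-1 : ℤ) * (bb⁻¹ * (dd ^ (-1 : ℤ) * dd ^ e)))) := by rw [mvAinv0]
      _ = aa ^ (-(n : ℤ) - 1) * (cc ^ k *
            ((dd ^ k * cc ^ (-1 : ℤ)) * (bb⁻¹ * (dd ^ (-1 : ℤ) * dd ^ e)))) := by group
      _ = aa ^ (-(n : ℤ) - 1) * (cc ^ k *
            ((cc ^ (-1 : ℤ) * dd ^ k) * (bb⁻¹ * (dd ^ (-1 : ℤ) * dd ^ e)))) := by
          rw [hd1 k (cc ^ (-1 : ℤ))]
      _ = aa ^ (-(n : ℤ) - 1) * (cc ^ (k - 1) *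
            ((dd ^ k * bb⁻¹) * (dd ^ (-1 : ℤ) * dd ^ e))) := by group
      _ = aa ^ (-(n : ℤ) - 1) * (cc ^ (k - 1) *
            ((bb⁻¹ * dd ^ k) * (dd ^ (-1 : ℤ) * dd ^ e))) := by rw [hd1 k bb⁻¹]
      _ = aa ^ (-(n : ℤ) - 1) * (cc ^ (k - 1) * (bb⁻¹ * dd ^ (e + k - 1))) := by group

/-! ### The normal form -/

theorem normal_form (g : PresentedGroup engelRels) :
    ∃ i j k m : ℤ, g = aa ^ i * (bb ^ j * (cc ^ k * dd ^ m)) := by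
  have main : ∀ w : FreeGroup Bool, ∀ i j k m : ℤ, ∃ i' j' k' m' : ℤ,
      PresentedGroup.mk engelRels w * (aa ^ i * (bb ^ j * (cc ^ k * dd ^ m))) =
        aa ^ i' * (bb ^ j' * (cc ^ k' * dd ^ m')) := by
    intro w
    induction w using FreeGroup.induction_on with
    | C1 => exact fun i j k m => ⟨i, j, k, m, by rw [map_one, one_mul]⟩
    | of x =>
      cases x with
      | true => exact fun i j k m => ⟨1 + i, j, k, m, by
          show aa * _ = _
          group⟩
      | false =>
        intro i j k m
        obtain ⟨k1, e1, hbA⟩ := L_bA i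
        obtain ⟨e2, hcB⟩ := L_cB k1 (1 + j)
        refine ⟨i, 1 + j, k1 + k, e2 + e1 + m, ?_⟩
        show bb * _ = _
        calc bb * (aa ^ i * (bb ^ j * (cc ^ k * dd ^ m)))
            = (bb * aa ^ i) * (bb ^ j * (cc ^ k * dd ^ m)) := by group
          _ = (aa ^ i * (cc ^ k1 * (bb * dd ^ e1))) * (bb ^ j * (cc ^ k * dd ^ m)) := by
              rw [hbA]
          _ = aa ^ i * (cc ^ k1 * (bb * ((dd ^ e1 * bb ^ j) * (cc ^ k * dd ^ m)))) := by group
          _ = aa ^ i * (cc ^ k1 * (bb * ((bb ^ j * dd ^ e1) * (cc ^ k * dd ^ m)))) := by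
              rw [hd1 e1 (bb ^ j)]
          _ = aa ^ i * ((cc ^ k1 * bb ^ (1 + j)) * ((dd ^ e1 * cc ^ k) * dd ^ m)) := by group
          _ = aa ^ i * ((bb ^ (1 + j) * (cc ^ k1 * dd ^ e2)) * ((cc ^ k * dd ^ e1) * dd ^ m)) := by
              rw [hcB, hd1 e1 (cc ^ k)]
          _ = aa ^ i * (bb ^ (1 + j) * (cc ^ k1 * ((dd ^ e2 * cc ^ k) * (dd ^ e1 * dd ^ m)))) := by
              group
          _ = aa ^ i * (bb ^ (1 + j) * (cc ^ k1 * ((cc ^ k * dd ^ e2) * (dd ^ e1 * dd ^ m)))) := by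
              rw [hd1 e2 (cc ^ k)]
          _ = aa ^ i * (bb ^ (1 + j) * (cc ^ (k1 + k) * dd ^ (e2 + e1 + m))) := by group
    | inv_of x _ =>
      cases x with
      | true => exact fun i j k m => ⟨-1 + i, j, k, m, by
          rw [map_inv]
          show aa⁻¹ * _ = _
          group⟩
      | false =>
        intro i j k m
        obtain ⟨k1, e1, hbA⟩ := L_binvA i
        obtain ⟨e2, hcB⟩ := L_cB k1 (-1 + j)
        refine ⟨i, -1 + j, k1 + k, e2 + e1 + m, ?_⟩
        rw [map_inv]
        show bb⁻¹ * _ = _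
        calc bb⁻¹ * (aa ^ i * (bb ^ j * (cc ^ k * dd ^ m)))
            = (bb⁻¹ * aa ^ i) * (bb ^ j * (cc ^ k * dd ^ m)) := by group
          _ = (aa ^ i * (cc ^ k1 * (bb⁻¹ * dd ^ e1))) * (bb ^ j * (cc ^ k * dd ^ m)) := by
              rw [hbA]
          _ = aa ^ i * (cc ^ k1 * (bb⁻¹ * ((dd ^ e1 * bb ^ j) * (cc ^ k * dd ^ m)))) := by group
          _ = aa ^ i * (cc ^ k1 * (bb⁻¹ * ((bb ^ j * dd ^ e1) * (cc ^ k * dd ^ m)))) := by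
              rw [hd1 e1 (bb ^ j)]
          _ = aa ^ i * ((cc ^ k1 * bb ^ (-1 + j)) * ((dd ^ e1 * cc ^ k) * dd ^ m)) := by group
          _ = aa ^ i * ((bb ^ (-1 + j) * (cc ^ k1 * dd ^ e2)) *
                ((cc ^ k * dd ^ e1) * dd ^ m)) := by rw [hcB, hd1 e1 (cc ^ k)]
          _ = aa ^ i * (bb ^ (-1 + j) *
                (cc ^ k1 * ((dd ^ e2 * cc ^ k) * (dd ^ e1 * dd ^ m)))) := by group
          _ = aa ^ i * (bb ^ (-1 + j) *
                (cc ^ k1 * ((cc ^ k * dd ^ e2) * (dd ^ e1 * dd ^ m)))) := by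
              rw [hd1 e2 (cc ^ k)]
          _ = aa ^ i * (bb ^ (-1 + j) * (cc ^ (k1 + k) * dd ^ (e2 + e1 + m))) := by group
    | mul x y ihx ihy =>
      intro i j k m
      obtain ⟨i1, j1, k1, m1, h1⟩ := ihy i j k m
      obtain ⟨i2, j2, k2, m2, h2⟩ := ihx i1 j1 k1 m1
      exact ⟨i2, j2, k2, m2, by rw [map_mul, mul_assoc, h1, h2]⟩
  obtain ⟨w, rfl⟩ := PresentedGroup.mk_surjective engelRels g
  obtain ⟨i, j, k, m, h⟩ := main w 0 0 0 0
  refine ⟨i, j, k, m, ?_⟩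
  simpa using h

/-! ### Computations in the Engel group -/

/-- The value of `[a,b]` in the Engel group. -/
def Cv : Engel := ⟨0, 0, -2, 0⟩

/-- The value of `[a,[a,b]]` in the Engel group. -/
def Dv : Engel := ⟨0, 0, 0, -2⟩

lemma comm_ab : ⁅aPow 1, bPow 1⁆ = Cv := by
  ext <;> simp [commutatorElement_def, aPow, bPow, Cv] <;> norm_num

lemma comm_aC : ⁅aPow 1, Cv⁆ = Dv := by
  ext <;> simp [commutatorElement_def, aPow, Cv, Dv] <;> norm_num

lemma aPow_zpow (i : ℤ) : (aPow 1) ^ i = ⟨(i : ℝ), (i : ℝ), 0, 0⟩ := by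
  induction i using Int.induction_on with
  | zero => ext <;> simp
  | succ n ih => rw [zpow_add_one, ih]; ext <;> simp [aPow] <;> push_cast <;> ring
  | pred n ih => rw [zpow_sub_one, ih]; ext <;> simp [aPow] <;> push_cast <;> ring

lemma bPow_zpow (j : ℤ) : (bPow 1) ^ j = ⟨(j : ℝ), -(j : ℝ), 0, 0⟩ := by
  induction j using Int.induction_on with
  | zero => ext <;> simp
  | succ n ih => rw [zpow_add_one, ih]; ext <;> simp [bPow] <;> push_cast <;> ring
  | pred n ih => rw [zpow_sub_one, ih]; ext <;> simp [bPow] <;> push_cast <;> ring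

lemma Cv_zpow (k : ℤ) : Cv ^ k = ⟨0, 0, -2 * (k : ℝ), 0⟩ := by
  induction k using Int.induction_on with
  | zero => ext <;> simp
  | succ n ih => rw [zpow_add_one, ih]; ext <;> simp [Cv] <;> push_cast <;> ring
  | pred n ih => rw [zpow_sub_one, ih]; ext <;> simp [Cv] <;> push_cast <;> ring

lemma Dv_zpow (m : ℤ) : Dv ^ m = ⟨0, 0, 0, -2 * (m : ℝ)⟩ := by
  induction m using Int.induction_on with
  | zero => ext <;> simp
  | succ n ih => rw [zpow_add_one, ih]; ext <;> simp [Dv] <;> push_cast <;> ring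
  | pred n ih => rw [zpow_sub_one, ih]; ext <;> simp [Dv] <;> push_cast <;> ring

lemma nf_eval_one (i j k m : ℤ)
    (h : (aPow 1) ^ i * ((bPow 1) ^ j * (Cv ^ k * Dv ^ m)) = 1) :
    i = 0 ∧ j = 0 ∧ k = 0 ∧ m = 0 := by
  rw [aPow_zpow, bPow_zpow, Cv_zpow, Dv_zpow] at h
  have hx := congrArg Engel.x h
  have hy := congrArg Engel.y h
  simp only [mul_x, mul_y, one_x, one_y] at hx hy
  have hi : i = 0 := by
    have : (i : ℝ) = 0 := by linarith
    exact_mod_cast this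
  have hj : j = 0 := by
    have : (j : ℝ) = 0 := by linarith
    exact_mod_cast this
  subst hi; subst hj
  have hA := congrArg Engel.A h
  simp only [mul_A, mul_x, mul_y, one_A] at hA
  have hk : k = 0 := by
    have : (k : ℝ) = 0 := by push_cast at hA; linarith
    exact_mod_cast this
  subst hk
  have hB := congrArg Engel.B h
  simp only [mul_B, mul_A, mul_x, mul_y, one_B] at hB
  have hm : m = 0 := by
    have : (m : ℝ) = 0 := by push_cast at hB; linarith
    exact_mod_cast this
  exact ⟨rfl, rfl, rfl, hm⟩


/-- Any group homomorphism from the presented group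
`G = ⟨a, b | [a,[a,b]] = [b⁻¹,[a,b]] is central⟩` to `Ē` sending `a` to
`((1, 1), 0, 0)` and `b` to `((1, −1), 0, 0)` is injective, and its range is the
subgroup `𝓔` of `Ē` generated by those two elements; hence `G ≅ 𝓔`. -/
theorem presentedGroup_to_engel_injective
    (φ : PresentedGroup engelRels →* Engel)
    (ha : φ (PresentedGroup.of true) = aPow 1)
    (hb : φ (PresentedGroup.of false) = bPow 1) :
    Function.Injective φ ∧ φ.range = Subgroup.closure {aPow 1, bPow 1} := by
  have haa : φ aa = aPow 1 := ha
  have hbb : φ bb = bPow 1 := hb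
  have hcc : φ cc = Cv := by
    show φ ⁅aa, bb⁆ = Cv
    rw [map_commutatorElement, haa, hbb, comm_ab]
  have hdd : φ dd = Dv := by
    show φ ⁅aa, cc⁆ = Dv
    rw [map_commutatorElement, haa, hcc, comm_aC]
  constructor
  · intro g h hgh
    have h1 : φ (g * h⁻¹) = 1 := by rw [map_mul, map_inv, hgh, mul_inv_cancel]
    obtain ⟨i, j, k, m, hg⟩ := normal_form (g * h⁻¹)
    rw [hg] at h1
    rw [map_mul, map_mul, map_mul, map_zpow, map_zpow, map_zpow, map_zpow,
      haa, hbb, hcc, hdd] at h1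
    obtain ⟨hi, hj, hk, hm⟩ := nf_eval_one i j k m h1
    subst hi; subst hj; subst hk; subst hm
    simp only [zpow_zero, one_mul, mul_one] at hg
    exact mul_inv_eq_one.mp hg
  · have hrange : Set.range (PresentedGroup.of : Bool → PresentedGroup engelRels) = {aa, bb} := by
      ext z
      simp only [Set.mem_range, Set.mem_insert_iff, Set.mem_singleton_iff]
      constructor
      · rintro ⟨t, rfl⟩
        cases t
        · right; rfl
        · left; rfl
      · rintro (rfl | rfl)
        · exact ⟨true, rfl⟩
        · exact ⟨false, rfl⟩
    rw [MonoidHom.range_eq_map, ← PresentedGroup.closure_range_of engelRels, hrange,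
      MonoidHom.map_closure, Set.image_pair, haa, hbb]

end Engel
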